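/- Let K ≥ 2 be an integer and M, N positive integers. The linear program maximizing KN(λ₁+λ₂) over λ₁,λ₂ ∈ (0,1] subject to λ₁(N + min{M,(K-1)N}) + λ₂N ≤ M and λ₁ + λ₂(1 + N/M) ≤ 1, in the case M < (K-1)N (so min{M,(K-1)N} = M), has optimal value KN(M²+MN)/(M²+N²+MN). -/

import Mathlib

theorem stmt_3 (K M N : ℕ) (hK : 2 ≤ K) (hM : 0 < M) (hN : 0 < N)
    (h : M < (K - 1) * N) :
    IsGreatest {v : ℝ | ∃ l1 l2 : ℝ, l1 ∈ Set.Ioc (0 : ℝ) 1 ∧ l2 ∈ Set.Ioc (0 : ℝ) 1 ∧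
        l1 * ((N : ℝ) + min (M : ℝ) (((K : ℝ) - 1) * N)) + l2 * N ≤ M ∧
        l1 + l2 * (1 + (N : ℝ) / M) ≤ 1 ∧
        v = (K : ℝ) * N * (l1 + l2)}
      ((K : ℝ) * N * ((M : ℝ) ^ 2 + M * N) / ((M : ℝ) ^ 2 + (N : ℝ) ^ 2 + M * N)) := by
  have hm : (0:ℝ) < M := by exact_mod_cast hM
  have hn : (0:ℝ) < N := by exact_mod_cast hN
  have hD : (0:ℝ) < (M : ℝ) ^ 2 + (N : ℝ) ^ 2 + M * N := by positivity
  have hmin : min (M : ℝ) (((K : ℝ) - 1) * N) = (M : ℝ) := by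
    apply min_eq_left
    have h1 : ((K:ℝ) - 1) = ((K - 1 : ℕ) : ℝ) := by
      have : (1:ℕ) ≤ K := le_trans (by norm_num) hK
      push_cast [this]; ring
    rw [h1]
    exact_mod_cast h.le
  constructor
  · refine ⟨(M:ℝ)^2 / ((M : ℝ) ^ 2 + (N : ℝ) ^ 2 + M * N),
      (M:ℝ)*N / ((M : ℝ) ^ 2 + (N : ℝ) ^ 2 + M * N), ⟨by positivity, ?_⟩,
      ⟨by positivity, ?_⟩, ?_, ?_, ?_⟩
    · rw [div_le_one hD]; nlinarith
    · rw [div_le_one hD]; nlinarith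
    · rw [hmin, div_mul_eq_mul_div, div_mul_eq_mul_div, ← add_div,
        div_le_iff₀ hD]; nlinarith
    · have e : (M:ℝ)*N / ((M : ℝ) ^ 2 + (N : ℝ) ^ 2 + M * N) * (1 + (N:ℝ)/M)
          = ((M:ℝ)*N + N^2) / ((M : ℝ) ^ 2 + (N : ℝ) ^ 2 + M * N) := by
        field_simp
      rw [e, ← add_div, div_le_one hD]; nlinarith
    · field_simp
  · rintro v ⟨l1, l2, ⟨hl1, _⟩, ⟨hl2, _⟩, hA, hB, rfl⟩
    rw [hmin] at hA
    have hB' : l1 * M + l2 * ((M:ℝ) + N) ≤ M := by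
      have := mul_le_mul_of_nonneg_right hB hm.le
      calc l1 * M + l2 * ((M:ℝ) + N) = (l1 + l2 * (1 + (N:ℝ)/M)) * M := by
            field_simp
        _ ≤ 1 * M := this
        _ = M := one_mul _
    have hKpos : (0:ℝ) < K := by positivity
    rw [mul_div_assoc]
    have key : l1 + l2 ≤ ((M:ℝ)^2 + M*N) / ((M : ℝ) ^ 2 + (N : ℝ) ^ 2 + M * N) := by
      rw [le_div_iff₀ hD]
      nlinarith [mul_le_mul_of_nonneg_left hA hn.le, mul_le_mul_of_nonneg_left hB' hm.le]
    exact mul_le_mul_of_nonneg_left key (by positivity)
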